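/- Let W and Ŵ be real Banach spaces and let G : W → Ŵ be three times continuously (Fréchet) differentiable with ‖DG(x)‖ ≤ c_G, ‖D²G(x)‖ ≤ c_G and ‖D³G(x)‖ ≤ c_G for all x ∈ W. Then there exists a constant C, depending only on c_G, such that for all x₁, x₂, x₃, x₄ ∈ W: ‖G(x₂) − G(x₁) − DG(x₁)(x₂ − x₁) − G(x₄) + G(x₃) + DG(x₃)(x₄ − x₃)‖ ≤ C (‖x₂ − x₁‖ + ‖x₄ − x₃‖) ‖x₂ − x₁ − x₄ + x₃‖ + C ‖x₄ − x₃‖² (‖x₃ − x₁‖ + ‖x₄ − x₂‖). -/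

import Mathlib

/-- Mean value: Lipschitz bound from a global derivative bound. -/
lemma aux_lip {E F : Type*} [NormedAddCommGroup E] [NormedSpace ℝ E]
    [NormedAddCommGroup F] [NormedSpace ℝ F]
    (f : E → F) (f' : E → E →L[ℝ] F) (hf : ∀ x, HasFDerivAt f (f' x) x)
    (c : ℝ) (hc : ∀ x, ‖f' x‖ ≤ c) (x y : E) : ‖f y - f x‖ ≤ c * ‖y - x‖ :=
  convex_univ.norm_image_sub_le_of_norm_hasFDerivWithin_le
    (fun z _ => (hf z).hasFDerivWithinAt) (fun z _ => hc z) trivial trivial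

/-- Taylor-type remainder estimate comparing the increment with the derivative at a base point,
assuming the derivative is Lipschitz. -/
lemma aux_taylor {E F : Type*} [NormedAddCommGroup E] [NormedSpace ℝ E]
    [NormedAddCommGroup F] [NormedSpace ℝ F]
    (f : E → F) (f' : E → E →L[ℝ] F) (hf : ∀ x, HasFDerivAt f (f' x) x)
    (c : ℝ) (hc : ∀ x y, ‖f' y - f' x‖ ≤ c * ‖y - x‖) (hc0 : 0 ≤ c) (x a b : E) :
    ‖f b - f a - f' x (b - a)‖ ≤ c * (‖b - x‖ + ‖a - x‖) * ‖b - a‖ := by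
  apply Convex.norm_image_sub_le_of_norm_hasFDerivWithin_le'
    (fun z _ => (hf z).hasFDerivWithinAt) ?_ (convex_segment a b)
    (left_mem_segment ℝ a b) (right_mem_segment ℝ a b)
  intro z hz
  rcases hz with ⟨s, t, hs, ht, hst, rfl⟩
  have hzx : ‖s • a + t • b - x‖ ≤ ‖b - x‖ + ‖a - x‖ := by
    have : s • a + t • b - x = s • (a - x) + t • (b - x) := by
      rw [smul_sub, smul_sub, sub_add_sub_comm, ← add_smul, hst, one_smul]
    rw [this]
    calc ‖s • (a - x) + t • (b - x)‖ ≤ ‖s • (a - x)‖ + ‖t • (b - x)‖ := norm_add_le _ _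
      _ = s * ‖a - x‖ + t * ‖b - x‖ := by
          rw [norm_smul, norm_smul, Real.norm_of_nonneg hs, Real.norm_of_nonneg ht]
      _ ≤ 1 * ‖a - x‖ + 1 * ‖b - x‖ := by
          gcongr <;> [exact le_trans (le_add_of_nonneg_right ht) hst.le;
            exact le_trans (le_add_of_nonneg_left hs) hst.le]
      _ = ‖b - x‖ + ‖a - x‖ := by ring
  calc ‖f' (s • a + t • b) - f' x‖ ≤ c * ‖s • a + t • b - x‖ := hc _ _
    _ ≤ c * (‖b - x‖ + ‖a - x‖) := by gcongr

/-- Third-order (Taylor remainder) difference estimate for a `C³_b` function. -/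
theorem third_order_difference_estimate
    {W Wh : Type*} [NormedAddCommGroup W] [NormedSpace ℝ W]
    [NormedAddCommGroup Wh] [NormedSpace ℝ Wh]
    (G : W → Wh) (cG : ℝ)
    (hG : ContDiff ℝ 3 G)
    (hG1 : ∀ x : W, ‖fderiv ℝ G x‖ ≤ cG)
    (hG2 : ∀ x : W, ‖fderiv ℝ (fderiv ℝ G) x‖ ≤ cG)
    (hG3 : ∀ x : W, @norm _ ContinuousLinearMap.hasOpNorm (fderiv ℝ (fderiv ℝ (fderiv ℝ G)) x) ≤ cG) :
    ∃ C : ℝ, 0 ≤ C ∧ ∀ x₁ x₂ x₃ x₄ : W,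
      ‖G x₂ - G x₁ - fderiv ℝ G x₁ (x₂ - x₁) - G x₄ + G x₃ + fderiv ℝ G x₃ (x₄ - x₃)‖ ≤
        C * (‖x₂ - x₁‖ + ‖x₄ - x₃‖) * ‖x₂ - x₁ - x₄ + x₃‖ +
          C * ‖x₄ - x₃‖ ^ 2 * (‖x₃ - x₁‖ + ‖x₄ - x₂‖) := by
  have hcG : 0 ≤ cG := le_trans (norm_nonneg _) (hG1 0)
  set DG := fderiv ℝ G with hDGdef
  set D2 := fderiv ℝ DG with hD2def
  have hGd : ∀ x, HasFDerivAt G (DG x) x := fun x =>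
    ((hG.differentiable (by norm_num)) x).hasFDerivAt
  have hDGc : ContDiff ℝ 2 DG := hG.fderiv_right (m := 2) (by norm_num)
  have hDGd : ∀ x, HasFDerivAt DG (D2 x) x := fun x =>
    ((hDGc.differentiable (by norm_num)) x).hasFDerivAt
  have hD2d : ∀ x, HasFDerivAt D2 (fderiv ℝ D2 x) x := fun x =>
    ((hDGc.fderiv_right (m := 1) (by norm_num)).differentiable (by norm_num) x).hasFDerivAt
  -- Lipschitz bounds for DG and D2
  have lipDG : ∀ x y, ‖DG y - DG x‖ ≤ cG * ‖y - x‖ := aux_lip DG D2 hDGd cG hG2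
  have lipD2 : ∀ x y, ‖D2 y - D2 x‖ ≤ cG * ‖y - x‖ := aux_lip D2 _ hD2d cG hG3
  refine ⟨cG, hcG, fun x₁ x₂ x₃ x₄ => ?_⟩
  set h₂ := x₄ - x₃ with hh2
  -- the function ψ and its derivative
  set ψ : W → Wh := fun x => G (x + h₂) - G x - DG x h₂ with hψ
  set ψ' : W → W →L[ℝ] Wh := fun x => DG (x + h₂) - DG x - (D2 x).flip h₂ with hψ'
  have hψd : ∀ x, HasFDerivAt ψ (ψ' x) x := by
    intro x
    have h1 : HasFDerivAt (fun x : W => G (x + h₂)) (DG (x + h₂)) x := by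
      have := (hGd (x + h₂)).comp x ((hasFDerivAt_id x).add_const h₂)
      exact this
    have h3 : HasFDerivAt (fun x : W => DG x h₂) ((D2 x).flip h₂) x := by
      have := (hDGd x).clm_apply (hasFDerivAt_const h₂ x)
      simpa using this
    exact (h1.sub (hGd x)).sub h3
  -- bound on ψ'
  have hψ'bound : ∀ x, ‖ψ' x‖ ≤ cG * ‖h₂‖ ^ 2 := by
    intro x
    have hsymm : (D2 x).flip h₂ = D2 x h₂ := by
      ext v
      exact second_derivative_symmetric hGd (hDGd x) v h₂
    have : ψ' x = DG (x + h₂) - DG x - D2 x (x + h₂ - x) := by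
      show DG (x + h₂) - DG x - (D2 x).flip h₂ = _
      rw [hsymm, add_sub_cancel_left]
    rw [this]
    have := aux_taylor DG D2 hDGd cG lipD2 hcG x x (x + h₂)
    simpa [sq, mul_assoc] using this
  -- Step 2: ‖ψ x₁ - ψ x₃‖
  have step2 : ‖ψ x₁ - ψ x₃‖ ≤ cG * ‖h₂‖ ^ 2 * ‖x₁ - x₃‖ :=
    aux_lip ψ ψ' hψd _ hψ'bound x₃ x₁
  -- Step 1
  have step1 : ‖G x₂ - G (x₁ + h₂) - DG x₁ (x₂ - x₁ - x₄ + x₃)‖ ≤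
      cG * (‖x₂ - x₁‖ + ‖h₂‖) * ‖x₂ - x₁ - x₄ + x₃‖ := by
    have := aux_taylor G DG hGd cG lipDG hcG x₁ (x₁ + h₂) x₂
    have e1 : x₂ - (x₁ + h₂) = x₂ - x₁ - x₄ + x₃ := by rw [hh2]; abel
    have e2 : x₁ + h₂ - x₁ = h₂ := by abel
    rw [e1, e2] at this
    exact this
  -- combine
  have key : G x₂ - G x₁ - DG x₁ (x₂ - x₁) - G x₄ + G x₃ + DG x₃ (x₄ - x₃) =
      (G x₂ - G (x₁ + h₂) - DG x₁ (x₂ - x₁ - x₄ + x₃)) + (ψ x₁ - ψ x₃) := by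
    show _ = _ + ((G (x₁ + h₂) - G x₁ - DG x₁ h₂) - (G (x₃ + h₂) - G x₃ - DG x₃ h₂))
    have e3 : x₃ + h₂ = x₄ := by rw [hh2]; abel
    rw [e3, hh2]
    have := (DG x₁).map_sub (x₂ - x₁) (x₄ - x₃)
    have e4 : DG x₁ (x₂ - x₁ - x₄ + x₃) = DG x₁ (x₂ - x₁) - DG x₁ (x₄ - x₃) := by
      rw [← (DG x₁).map_sub]; congr 1; abel
    rw [e4]; abel
  rw [key]
  calc ‖_ + _‖ ≤ ‖G x₂ - G (x₁ + h₂) - DG x₁ (x₂ - x₁ - x₄ + x₃)‖ + ‖ψ x₁ - ψ x₃‖ :=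
        norm_add_le _ _
    _ ≤ cG * (‖x₂ - x₁‖ + ‖h₂‖) * ‖x₂ - x₁ - x₄ + x₃‖ + cG * ‖h₂‖ ^ 2 * ‖x₁ - x₃‖ := by
        gcongr
    _ ≤ cG * (‖x₂ - x₁‖ + ‖x₄ - x₃‖) * ‖x₂ - x₁ - x₄ + x₃‖ +
          cG * ‖x₄ - x₃‖ ^ 2 * (‖x₃ - x₁‖ + ‖x₄ - x₂‖) := by
        rw [hh2, ← norm_sub_rev x₁ x₃]
        gcongr
        exact le_add_of_nonneg_right (norm_nonneg _)
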